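/- Let G be a very well-covered finite simple graph of order n ≥ 2 with independence number α. Then s_0 ≤ s_1 ≤ ⋯ ≤ s_{⌈α/2⌉} and s_{⌈(2α−1)/3⌉} ≥ s_{⌈(2α−1)/3⌉+1} ≥ ⋯ ≥ s_α. -/

import Mathlib

open Finset
open scoped Classical

variable {V : Type*}

/-- `S` is an independent set in `G`: its vertices are pairwise non-adjacent. -/
def IsIndepSet (G : SimpleGraph V) (S : Finset V) : Prop :=
  ∀ ⦃u⦄, u ∈ S → ∀ ⦃v⦄, v ∈ S → ¬ G.Adj u v

/-- The neighborhood `N(S)`: all vertices having at least one neighbor in `S`. -/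
noncomputable def neigh [Fintype V] (G : SimpleGraph V) (S : Finset V) : Finset V :=
  Finset.univ.filter fun v => ∃ u ∈ S, G.Adj u v

/-- The independence number `α(G)`: the maximum size of an independent set. -/
noncomputable def indepNum [Fintype V] (G : SimpleGraph V) : ℕ :=
  (Finset.univ.filter fun S : Finset V => IsIndepSet G S).sup Finset.card

/-- `s_k`: the number of independent sets of size `k` in `G`. -/
noncomputable def indepCount [Fintype V] (G : SimpleGraph V) (k : ℕ) : ℕ :=
  (Finset.univ.filter fun S : Finset V => IsIndepSet G S ∧ S.card = k).card

/-- A maximal independent set (not properly contained in another independent set). -/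
def IsMaximalIndepSet (G : SimpleGraph V) (S : Finset V) : Prop :=
  IsIndepSet G S ∧ ∀ T : Finset V, IsIndepSet G T → S ⊆ T → S = T

/-- `G` is well-covered: all maximal independent sets have the same cardinality. -/
def IsWellCovered (G : SimpleGraph V) : Prop :=
  ∀ S T : Finset V, IsMaximalIndepSet G S → IsMaximalIndepSet G T → S.card = T.card

/-- `G` is 1-well-covered: it is well-covered, has at least two vertices, and
deleting any vertex leaves a well-covered graph. -/
def IsOneWellCovered [Fintype V] (G : SimpleGraph V) : Prop :=
  IsWellCovered G ∧ 2 ≤ Fintype.card V ∧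
    ∀ v : V, IsWellCovered (G.induce ({v}ᶜ : Set V))

/-- The corona `H ∘ K₂`: for each vertex `v` of `H`, two new vertices
(`(v, false)` and `(v, true)`) adjacent to each other and to `v` are added. -/
def corona2 (H : SimpleGraph V) : SimpleGraph (V ⊕ V × Bool) :=
  SimpleGraph.fromRel fun x y =>
    match x, y with
    | Sum.inl u, Sum.inl v => H.Adj u v
    | Sum.inl u, Sum.inr (v, _) => u = v
    | Sum.inr (u, _), Sum.inr (v, _) => u = v
    | _, _ => False

section Aux

variable [Fintype V] {G : SimpleGraph V}

lemma isIndepSet_subset {A B : Finset V} (hB : IsIndepSet G B) (h : A ⊆ B) :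
    IsIndepSet G A := fun u hu v hv => hB (h hu) (h hv)

lemma isIndepSet_empty : IsIndepSet G (∅ : Finset V) :=
  fun u hu => absurd hu (Finset.notMem_empty u)

lemma mem_neigh' {S : Finset V} {v : V} : v ∈ neigh G S ↔ ∃ u ∈ S, G.Adj u v := by
  simp [neigh]

lemma card_le_indepNum' {S : Finset V} (h : IsIndepSet G S) : S.card ≤ indepNum G := by
  apply Finset.le_sup (f := Finset.card)
  simp [h]

lemma exists_maximal_superset {A : Finset V} (hA : IsIndepSet G A) :
    ∃ M, IsMaximalIndepSet G M ∧ A ⊆ M := by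
  obtain ⟨M, hM, hmax⟩ := Finset.exists_max_image
      (univ.filter fun T : Finset V => IsIndepSet G T ∧ A ⊆ T) Finset.card
      ⟨A, by simp [hA]⟩
  simp only [mem_filter, mem_univ, true_and] at hM hmax
  refine ⟨M, ⟨hM.1, fun T hT hMT => ?_⟩, hM.2⟩
  exact Finset.eq_of_subset_of_card_le hMT (hmax T ⟨hT, hM.2.trans hMT⟩)

lemma maximalIndepSet_card (hwc : IsWellCovered G) {M : Finset V}
    (hM : IsMaximalIndepSet G M) : M.card = indepNum G := by
  obtain ⟨S, hS, hSsup⟩ := Finset.exists_mem_eq_sup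
      (univ.filter fun T : Finset V => IsIndepSet G T)
      ⟨∅, by simp [isIndepSet_empty]⟩ Finset.card
  simp only [mem_filter, mem_univ, true_and] at hS
  obtain ⟨M₀, hM₀, hSM₀⟩ := exists_maximal_superset hS
  have hM₀card : M₀.card = indepNum G := by
    refine le_antisymm (card_le_indepNum' hM₀.1) ?_
    calc indepNum G = S.card := hSsup
      _ ≤ M₀.card := card_le_card hSM₀
  rw [← hM₀card]
  exact hwc M M₀ hM hM₀

lemma star_lemma (hwc : IsWellCovered G) {Q X : Finset V}
    (hQ : IsMaximalIndepSet G Q) (hX : IsIndepSet G X) (hd : ∀ x ∈ X, x ∉ Q) :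
    X.card ≤ (neigh G X ∩ Q).card := by
  have hY : IsIndepSet G (X ∪ (Q \ neigh G X)) := by
    intro u hu v hv hadj
    rcases mem_union.mp hu with hu | hu <;> rcases mem_union.mp hv with hv | hv
    · exact hX hu hv hadj
    · exact (mem_sdiff.mp hv).2 (mem_neigh'.mpr ⟨u, hu, hadj⟩)
    · exact (mem_sdiff.mp hu).2 (mem_neigh'.mpr ⟨v, hv, hadj.symm⟩)
    · exact hQ.1 (mem_sdiff.mp hu).1 (mem_sdiff.mp hv).1 hadj
  have h1 : (X ∪ (Q \ neigh G X)).card ≤ Q.card := by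
    rw [maximalIndepSet_card hwc hQ]
    exact card_le_indepNum' hY
  have hdisj : Disjoint X (Q \ neigh G X) := by
    rw [Finset.disjoint_left]
    intro a ha ha'
    exact hd a ha (mem_sdiff.mp ha').1
  rw [card_union_of_disjoint hdisj] at h1
  have h2 : (Q \ neigh G X).card + (Q ∩ neigh G X).card = Q.card :=
    Finset.card_sdiff_add_card_inter Q (neigh G X)
  have h3 : (Q ∩ neigh G X).card = (neigh G X ∩ Q).card := by rw [inter_comm]
  omega

lemma hall_aux (hwc : IsWellCovered G) (hiso : ∀ v : V, ∃ w : V, G.Adj v w) :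
    ∀ m : ℕ, ∀ S M : Finset V, S.card ≤ m → IsMaximalIndepSet G M → S ⊆ M →
      S.card ≤ (neigh G S).card := by
  intro m
  induction m with
  | zero => intro S M h _ _; omega
  | succ m ih =>
    intro S M hSm hM hSM
    rcases S.eq_empty_or_nonempty with rfl | hSne
    · simp
    set T := neigh G S with hT
    obtain ⟨I, hImem, hImax⟩ := Finset.exists_max_image
        (univ.filter fun I : Finset V => I ⊆ T ∧ IsIndepSet G I) Finset.card
        ⟨∅, by simp [isIndepSet_empty]⟩
    simp only [mem_filter, mem_univ, true_and] at hImem hImax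
    obtain ⟨hIT, hIindep⟩ := hImem
    have hdom : ∀ t ∈ T, t ∉ I → t ∈ neigh G I := by
      intro t htT htI
      by_contra hn
      have hins : IsIndepSet G (insert t I) := by
        intro u hu v hv hadj
        rcases mem_insert.mp hu with h1 | h1 <;> rcases mem_insert.mp hv with h2 | h2
        · exact G.irrefl (by rwa [h1, h2] at hadj)
        · exact hn (mem_neigh'.mpr ⟨v, h2, (show G.Adj t v by rwa [h1] at hadj).symm⟩)
        · exact hn (mem_neigh'.mpr ⟨u, h1, show G.Adj u t by rwa [h2] at hadj⟩)
        · exact hIindep h1 h2 hadj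
      have hle := hImax (insert t I) ⟨insert_subset htT hIT, hins⟩
      rw [card_insert_of_notMem htI] at hle
      omega
    have hTne : T.Nonempty := by
      obtain ⟨s, hs⟩ := hSne
      obtain ⟨w, hw⟩ := hiso s
      exact ⟨w, mem_neigh'.mpr ⟨s, hs, hw⟩⟩
    have hIne : I.Nonempty := by
      rcases I.eq_empty_or_nonempty with h | h
      · exfalso
        obtain ⟨t, ht⟩ := hTne
        have hmem := hdom t ht (by simp [h])
        rw [mem_neigh'] at hmem
        obtain ⟨u, hu, -⟩ := hmem
        rw [h] at hu
        exact absurd hu (notMem_empty u)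
      · exact h
    set X := S ∩ neigh G I with hX
    have hXne : X.Nonempty := by
      obtain ⟨i, hi⟩ := hIne
      have hiT : i ∈ T := hIT hi
      rw [hT, mem_neigh'] at hiT
      obtain ⟨s, hs, hadj⟩ := hiT
      exact ⟨s, mem_inter.mpr ⟨hs, mem_neigh'.mpr ⟨i, hi, hadj.symm⟩⟩⟩
    have hQindep : IsIndepSet G (I ∪ (M \ neigh G I)) := by
      intro u hu v hv hadj
      rcases mem_union.mp hu with hu | hu <;> rcases mem_union.mp hv with hv | hv
      · exact hIindep hu hv hadj
      · exact (mem_sdiff.mp hv).2 (mem_neigh'.mpr ⟨u, hu, hadj⟩)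
      · exact (mem_sdiff.mp hu).2 (mem_neigh'.mpr ⟨v, hv, hadj.symm⟩)
      · exact hM.1 (mem_sdiff.mp hu).1 (mem_sdiff.mp hv).1 hadj
    obtain ⟨Q, hQmax, hQsub⟩ := exists_maximal_superset hQindep
    have hIQ : I ⊆ Q := (subset_union_left).trans hQsub
    have hnI_Q : ∀ v ∈ neigh G I, v ∉ Q := by
      intro v hv hvQ
      rw [mem_neigh'] at hv
      obtain ⟨u, hu, hadj⟩ := hv
      exact hQmax.1 (hIQ hu) hvQ hadj
    have hTQ : ∀ t ∈ T, t ∈ Q → t ∈ I := by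
      intro t ht htQ
      by_contra h
      exact hnI_Q t (hdom t ht h) htQ
    have hXI : X.card ≤ I.card := by
      have hXindep : IsIndepSet G X := isIndepSet_subset hM.1 ((inter_subset_left).trans hSM)
      have hd : ∀ x ∈ X, x ∉ Q := fun x hx => hnI_Q x (mem_inter.mp hx).2
      refine (star_lemma hwc hQmax hXindep hd).trans (card_le_card ?_)
      intro v hv
      obtain ⟨hv1, hv2⟩ := mem_inter.mp hv
      rw [mem_neigh'] at hv1
      obtain ⟨u, hu, hadj⟩ := hv1
      exact hTQ v (mem_neigh'.mpr ⟨u, (mem_inter.mp hu).1, hadj⟩) hv2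
    set S' := S \ neigh G I with hS'
    have hS'Q : S' ⊆ Q := by
      intro s hs
      obtain ⟨hs1, hs2⟩ := mem_sdiff.mp hs
      exact hQsub (mem_union_right _ (mem_sdiff.mpr ⟨hSM hs1, hs2⟩))
    have hcards : X.card + S'.card = S.card := Finset.card_inter_add_card_sdiff S (neigh G I)
    have hXpos : 0 < X.card := hXne.card_pos
    have hS'le : S'.card ≤ m := by omega
    have hIH := ih S' Q hS'le hQmax hS'Q
    have hS'T : neigh G S' ⊆ T \ I := by
      intro v hv
      rw [mem_neigh'] at hv
      obtain ⟨u, hu, hadj⟩ := hv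
      obtain ⟨hu1, hu2⟩ := mem_sdiff.mp hu
      refine mem_sdiff.mpr ⟨mem_neigh'.mpr ⟨u, hu1, hadj⟩, fun hvI => ?_⟩
      exact hu2 (mem_neigh'.mpr ⟨v, hvI, hadj.symm⟩)
    have h5 : S'.card ≤ (T \ I).card := hIH.trans (card_le_card hS'T)
    have h6 : (T \ I).card = T.card - I.card := Finset.card_sdiff_of_subset hIT
    have h7 : I.card ≤ T.card := card_le_card hIT
    omega

lemma hall_neigh (hwc : IsWellCovered G) (hiso : ∀ v : V, ∃ w : V, G.Adj v w)
    {A : Finset V} (hA : IsIndepSet G A) : A.card ≤ (neigh G A).card := by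
  obtain ⟨M, hM, hAM⟩ := exists_maximal_superset hA
  exact hall_aux hwc hiso A.card A M le_rfl hM hAM

/-- Vertices extending an independent set `A` to a larger independent set. -/
noncomputable def extSet (G : SimpleGraph V) (A : Finset V) : Finset V :=
  univ.filter fun v => v ∉ A ∧ IsIndepSet G (insert v A)

lemma sum_ext (G : SimpleGraph V) (k : ℕ) :
    ∑ A ∈ univ.filter (fun A : Finset V => IsIndepSet G A ∧ A.card = k),
      (extSet G A).card = (k + 1) * indepCount G (k + 1) := by
  set P : Finset (Finset V × V) :=
    univ.filter (fun p : Finset V × V =>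
      p.2 ∉ p.1 ∧ IsIndepSet G (insert p.2 p.1) ∧ p.1.card = k) with hP
  have h1 : P.card = ∑ A ∈ univ.filter (fun A : Finset V => IsIndepSet G A ∧ A.card = k),
      (extSet G A).card := by
    rw [Finset.card_eq_sum_card_fiberwise (f := Prod.fst)
        (t := univ.filter (fun A : Finset V => IsIndepSet G A ∧ A.card = k)) ?side]
    case side =>
      intro p hp
      simp only [hP, Finset.mem_coe, mem_filter, mem_univ, true_and] at hp
      simp only [Finset.mem_coe, mem_filter, mem_univ, true_and]
      exact ⟨isIndepSet_subset hp.2.1 (subset_insert _ _), hp.2.2⟩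
    refine Finset.sum_congr rfl fun A hA => ?_
    simp only [mem_filter, mem_univ, true_and] at hA
    refine Finset.card_bij' (fun p _ => p.2) (fun v _ => (A, v)) ?_ ?_ ?_ ?_
    · intro p hp
      simp only [hP, mem_filter, mem_univ, true_and] at hp
      obtain ⟨⟨h1', h2', h3'⟩, h4'⟩ := hp
      subst h4'
      simp only [extSet, mem_filter, mem_univ, true_and]
      exact ⟨h1', h2'⟩
    · intro v hv
      simp only [extSet, mem_filter, mem_univ, true_and] at hv
      exact mem_filter.mpr ⟨mem_filter.mpr ⟨mem_univ _, hv.1, hv.2, hA.2⟩, rfl⟩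
    · intro p hp
      simp only [hP, mem_filter, mem_univ, true_and] at hp
      exact (Prod.ext_iff.mpr ⟨hp.2.symm, rfl⟩)
    · intro v hv
      rfl
  have h2 : P.card = (k + 1) * indepCount G (k + 1) := by
    rw [Finset.card_eq_sum_card_fiberwise (f := fun p : Finset V × V => insert p.2 p.1)
        (t := univ.filter (fun B : Finset V => IsIndepSet G B ∧ B.card = k + 1)) ?side2]
    case side2 =>
      intro p hp
      simp only [hP, Finset.mem_coe, mem_filter, mem_univ, true_and] at hp
      simp only [Finset.mem_coe, mem_filter, mem_univ, true_and]
      exact ⟨hp.2.1, by rw [card_insert_of_notMem hp.1, hp.2.2]⟩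
    have hfib : ∀ B ∈ univ.filter (fun B : Finset V => IsIndepSet G B ∧ B.card = k + 1),
        (P.filter fun p => insert p.2 p.1 = B).card = k + 1 := by
      intro B hB
      simp only [mem_filter, mem_univ, true_and] at hB
      have hcard : (P.filter fun p => insert p.2 p.1 = B).card = B.card := by
        refine Finset.card_bij' (fun p _ => p.2) (fun v _ => (B.erase v, v)) ?_ ?_ ?_ ?_
        · intro p hp
          simp only [hP, mem_filter, mem_univ, true_and] at hp
          exact hp.2 ▸ mem_insert_self p.2 p.1
        · intro v hv
          simp only [hP, mem_filter, mem_univ, true_and]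
          have hins : insert v (B.erase v) = B := insert_erase hv
          refine ⟨⟨notMem_erase v B, ?_, ?_⟩, hins⟩
          · rw [hins]; exact hB.1
          · simp [card_erase_of_mem hv, hB.2]
        · intro p hp
          simp only [hP, mem_filter, mem_univ, true_and] at hp
          have h' : B.erase p.2 = p.1 := by rw [← hp.2, Finset.erase_insert hp.1.1]
          exact Prod.ext_iff.mpr ⟨h', rfl⟩
        · intro v hv
          rfl
      rw [hcard, hB.2]
    rw [Finset.sum_congr rfl hfib, Finset.sum_const, smul_eq_mul, indepCount, mul_comm]
  rw [← h1, h2]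

lemma ext_lower (hwc : IsWellCovered G) {A : Finset V} (hA : IsIndepSet G A) :
    indepNum G - A.card ≤ (extSet G A).card := by
  obtain ⟨M, hM, hAM⟩ := exists_maximal_superset hA
  have hMcard : M.card = indepNum G := maximalIndepSet_card hwc hM
  have hsub : M \ A ⊆ extSet G A := by
    intro v hv
    obtain ⟨hv1, hv2⟩ := mem_sdiff.mp hv
    simp only [extSet, mem_filter, mem_univ, true_and]
    exact ⟨hv2, isIndepSet_subset hM.1 (insert_subset hv1 hAM)⟩
  calc indepNum G - A.card = M.card - A.card := by rw [hMcard]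
    _ = (M \ A).card := (card_sdiff_of_subset hAM).symm
    _ ≤ _ := card_le_card hsub

lemma ext_upper (hwc : IsWellCovered G) (hiso : ∀ v : V, ∃ w : V, G.Adj v w)
    {A : Finset V} (hA : IsIndepSet G A) :
    (extSet G A).card ≤ Fintype.card V - 2 * A.card := by
  have hdisj : Disjoint A (neigh G A) := by
    rw [Finset.disjoint_left]
    intro a ha ha'
    rw [mem_neigh'] at ha'
    obtain ⟨u, hu, hadj⟩ := ha'
    exact hA hu ha hadj
  have hsub : extSet G A ⊆ univ \ (A ∪ neigh G A) := by
    intro v hv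
    simp only [extSet, mem_filter, mem_univ, true_and] at hv
    obtain ⟨hv1, hv2⟩ := hv
    refine mem_sdiff.mpr ⟨mem_univ v, ?_⟩
    rw [mem_union]
    rintro (h | h)
    · exact hv1 h
    · rw [mem_neigh'] at h
      obtain ⟨u, hu, hadj⟩ := h
      exact hv2 (mem_insert_of_mem hu) (mem_insert_self v A) hadj
  have h1 : (extSet G A).card ≤ Fintype.card V - (A ∪ neigh G A).card := by
    have h := card_le_card hsub
    rwa [Finset.card_sdiff_of_subset (subset_univ _), card_univ] at h
  have h2 : (A ∪ neigh G A).card = A.card + (neigh G A).card := card_union_of_disjoint hdisj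
  have h3 := hall_neigh hwc hiso hA
  have h4 : (A ∪ neigh G A).card ≤ Fintype.card V := by
    rw [← card_univ]; exact card_le_card (subset_univ _)
  omega

end Aux

/-- If `G` is a very well-covered graph of order `n ≥ 2` with
independence number `α`, then `s_0 ≤ s_1 ≤ ⋯ ≤ s_{⌈α/2⌉}` and
`s_{⌈(2α−1)/3⌉} ≥ s_{⌈(2α−1)/3⌉+1} ≥ ⋯ ≥ s_α`. -/
theorem stmt_6 {V : Type*} [Fintype V] (G : SimpleGraph V) (n : ℕ)
    (hn : Fintype.card V = n) (hn2 : 2 ≤ n) (alpha : ℕ) (ha : alpha = indepNum G)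
    (hwc : IsWellCovered G) (hiso : ∀ v : V, ∃ w : V, G.Adj v w)
    (hvwc : n = 2 * alpha) :
    (∀ k : ℕ, k < (alpha + 1) / 2 → indepCount G k ≤ indepCount G (k + 1)) ∧
    (∀ k : ℕ, (2 * alpha - 1 + 2) / 3 ≤ k → k < alpha →
      indepCount G (k + 1) ≤ indepCount G k) := by
  classical
  constructor
  · intro k hk
    have hk2 : 2 * k + 1 ≤ alpha := by omega
    have hsum := sum_ext G k
    set s := univ.filter (fun A : Finset V => IsIndepSet G A ∧ A.card = k) with hs
    have hlow : ∀ A ∈ s, alpha - k ≤ (extSet G A).card := by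
      intro A hA
      simp only [hs, mem_filter, mem_univ, true_and] at hA
      have h := ext_lower hwc hA.1
      rw [← ha, hA.2] at h
      exact h
    have hge : s.card * (alpha - k) ≤ ∑ A ∈ s, (extSet G A).card := by
      have := Finset.card_nsmul_le_sum s (fun A => (extSet G A).card) (alpha - k) hlow
      simpa using this
    have hchain : s.card * (k + 1) ≤ (k + 1) * indepCount G (k + 1) := by
      calc s.card * (k + 1) ≤ s.card * (alpha - k) :=
            Nat.mul_le_mul le_rfl (by omega)
        _ ≤ ∑ A ∈ s, (extSet G A).card := hge
        _ = (k + 1) * indepCount G (k + 1) := hsum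
    have hc : indepCount G k = s.card := rfl
    rw [hc]
    rw [mul_comm] at hchain
    exact Nat.le_of_mul_le_mul_left hchain (Nat.succ_pos k)
  · intro k hk1 hk2
    have halpha : 1 ≤ alpha := by omega
    have h3k : 2 * alpha ≤ 3 * k + 1 := by omega
    have hsum := sum_ext G k
    set s := univ.filter (fun A : Finset V => IsIndepSet G A ∧ A.card = k) with hs
    have hup : ∀ A ∈ s, (extSet G A).card ≤ 2 * alpha - 2 * k := by
      intro A hA
      simp only [hs, mem_filter, mem_univ, true_and] at hA
      have h := ext_upper hwc hiso hA.1
      rw [hA.2, hn, hvwc] at h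
      exact h
    have hle : ∑ A ∈ s, (extSet G A).card ≤ s.card * (2 * alpha - 2 * k) := by
      have := Finset.sum_le_card_nsmul s (fun A => (extSet G A).card) (2 * alpha - 2 * k) hup
      simpa using this
    have hchain : (k + 1) * indepCount G (k + 1) ≤ (k + 1) * s.card := by
      calc (k + 1) * indepCount G (k + 1) = ∑ A ∈ s, (extSet G A).card := hsum.symm
        _ ≤ s.card * (2 * alpha - 2 * k) := hle
        _ ≤ s.card * (k + 1) := Nat.mul_le_mul le_rfl (by omega)
        _ = (k + 1) * s.card := mul_comm _ _
    have hc : indepCount G k = s.card := rfl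
    rw [hc]
    exact Nat.le_of_mul_le_mul_left hchain (Nat.succ_pos k)
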